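/- For integers N ≥ 1, q, η with gcd(η, N) = 1, δ ∈ {0,1}, and L a fixed integer with L ≡ 1 mod 2^{v₂(N)} and L ≡ 0 mod p^{v_p(N)} for all odd primes p | N, the set D(q,η,δ) of invertible matrices mod N of the form (x, ηy; qη*y, x + δLy) (where η·η* ≡ 1 mod N) is an abelian subgroup of GL₂(ℤ/Nℤ). -/
import Mathlib


open Matrix

theorem stmt_13 (N : ℕ) (hN : 1 ≤ N) (q η ηs L : ℤ) (δ : ℕ)
    (hη : Int.gcd η N = 1) (hηs : η * ηs ≡ 1 [ZMOD (N : ℤ)]) (hδ : δ = 0 ∨ δ = 1)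
    (hL2 : L ≡ 1 [ZMOD ((2 : ℤ) ^ (N.factorization 2))])
    (hLodd : ∀ p : ℕ, p.Prime → p ≠ 2 → p ∣ N → ((p : ℤ) ^ (N.factorization p)) ∣ L) :
    ∃ H : Subgroup (GL (Fin 2) (ZMod N)),
      (∀ g : GL (Fin 2) (ZMod N), g ∈ H ↔
        ∃ x y : ZMod N, (g : Matrix (Fin 2) (Fin 2) (ZMod N)) =
          !![x, (η : ZMod N) * y;
             (q : ZMod N) * (ηs : ZMod N) * y, x + (δ : ZMod N) * (L : ZMod N) * y]) ∧
      ∀ a ∈ H, ∀ b ∈ H, a * b = b * a := by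
  set e : ZMod N := (η : ZMod N)
  set s : ZMod N := (ηs : ZMod N)
  set Q : ZMod N := (q : ZMod N)
  set d : ZMod N := (δ : ZMod N)
  set l : ZMod N := (L : ZMod N)
  set M : ZMod N → ZMod N → Matrix (Fin 2) (Fin 2) (ZMod N) :=
    fun x y => !![x, e * y; Q * s * y, x + d * l * y] with hM
  refine ⟨⟨⟨⟨setOf (fun g : GL (Fin 2) (ZMod N) =>
        ∃ x y : ZMod N, (g : Matrix (Fin 2) (Fin 2) (ZMod N)) = M x y), ?_⟩, ?_⟩, ?_⟩,
      fun g => Iff.rfl, ?_⟩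
  · rintro a b ⟨x, y, ha⟩ ⟨x', y', hb⟩
    refine ⟨x * x' + Q * e * s * y * y', x * y' + x' * y + d * l * y * y', ?_⟩
    show (a : Matrix (Fin 2) (Fin 2) (ZMod N)) * b = _
    rw [ha, hb, hM]
    simp only [Matrix.mul_fin_two]
    congr 1 <;> ring
  · exact ⟨1, 0, by simp [hM, Matrix.one_fin_two]⟩
  · rintro a ⟨x, y, ha⟩
    refine ⟨Ring.inverse ((M x y).det) * (x + d * l * y),
      -(Ring.inverse ((M x y).det) * y), ?_⟩
    show ((a⁻¹ : GL (Fin 2) (ZMod N)) : Matrix (Fin 2) (Fin 2) (ZMod N)) = _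
    rw [Matrix.coe_units_inv, Matrix.inv_def, ha, hM, Matrix.adjugate_fin_two]
    ext i j
    fin_cases i <;> fin_cases j <;>
      simp [Matrix.smul_apply, smul_eq_mul] <;> ring
  · rintro a ⟨x, y, ha⟩ b ⟨x', y', hb⟩
    ext : 1
    show (a : Matrix (Fin 2) (Fin 2) (ZMod N)) * b = (b : Matrix (Fin 2) (Fin 2) (ZMod N)) * a
    rw [ha, hb, hM]
    simp only [Matrix.mul_fin_two]
    congr 1 <;> ring
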